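/- Let θ, x, z solve x' = cos θ, z' = sin θ, z > 0, with θ'(s) = ((m−1) cos θ(s) + n)/z(s), θ(0) = 0, z(0) = z₀, where n ≥ 0 and n + m − 1 < 0. Then the maximal positive time of existence s̄ is finite, and z(s) → 0 as s → s̄. -/

import Mathlib

open Real Set Filter Topology


/-- A `C¹` function on an open set is Lipschitz on any compact convex subset. -/
lemma stmt6_aux_lipschitz {E F : Type*} [NormedAddCommGroup E] [NormedSpace ℝ E]
    [NormedAddCommGroup F] [NormedSpace ℝ F] {f : E → F} {U s : Set E}
    (hU : IsOpen U) (hsU : s ⊆ U) (hf : ContDiffOn ℝ 1 f U)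
    (hconv : Convex ℝ s) (hcomp : IsCompact s) :
    ∃ K : NNReal, LipschitzOnWith K f s := by
  have hdf : ContinuousOn (fderiv ℝ f) U := hf.continuousOn_fderiv_of_isOpen hU le_rfl
  obtain ⟨C, hC⟩ := hcomp.exists_bound_of_continuousOn (hdf.mono hsU)
  refine ⟨C.toNNReal, hconv.lipschitzOnWith_of_nnnorm_fderiv_le
    (fun x hx => (hf.differentiableOn one_ne_zero).differentiableAt (hU.mem_nhds (hsU hx)))
    (fun x hx => ?_)⟩
  have := hC x hx
  simp only [← NNReal.coe_le_coe, coe_nnnorm, Real.coe_toNNReal']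
  exact this.trans (le_max_left _ _)

/-- Picard–Lindelöf with the extra information that the solution stays in the ball. -/
lemma stmt6_aux_pl {E : Type*} [NormedAddCommGroup E] [NormedSpace ℝ E] [CompleteSpace E]
    {v : ℝ → E → E} {tMin t₀ tMax : ℝ} (ht₀ : t₀ ∈ Icc tMin tMax) (x₀ : E) {R : ℝ}
    {a L K : NNReal} (haR : (a : ℝ) = R)
    (hpl : IsPicardLindelof v ⟨t₀, ht₀⟩ x₀ a 0 L K) :
    ∃ f : ℝ → E, f t₀ = x₀ ∧ (∀ t, f t ∈ Metric.closedBall x₀ R) ∧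
      ∀ t ∈ Icc tMin tMax, HasDerivWithinAt f (v t (f t)) (Icc tMin tMax) t := by
  subst haR
  obtain ⟨α, hα⟩ := ODE.FunSpace.exists_isFixedPt_next hpl
    (Metric.mem_closedBall_self le_rfl)
  have hball : ∀ t, α.compProj t ∈ Metric.closedBall x₀ a :=
    fun t => α.compProj_mem_closedBall hpl.mul_max_le
  refine ⟨α.compProj, ?_, hball, fun t ht => ?_⟩
  · rw [ODE.FunSpace.compProj_of_mem ht₀]
    exact ODE.FunSpace.apply_of_zero α
  · have hfix : ∀ s ∈ Icc tMin tMax, α.compProj s = ODE.picard v t₀ x₀ α.compProj s := by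
      intro s hs
      rw [ODE.FunSpace.compProj_of_mem hs]
      exact (ODE.FunSpace.isFixedPt_next_iff hpl _).1 hα ⟨s, hs⟩
    have hd := ODE.hasDerivWithinAt_picard_Icc ht₀ hpl.continuousOn_uncurry
      α.continuous_compProj.continuousOn (fun s _ => hball s) x₀ ht
    exact hd.congr (fun s hs => hfix s hs) (hfix t ht)


set_option maxHeartbeats 1000000 in
/-- Case `n + m - 1 < 0`, `n ≥ 0`: the maximal positive time of existence `s̄`
of the generating curve of a parabolic surface with `κ₁ = m κ₂ + n`,
`θ(0) = 0`, is finite, and `z(s) → 0` as `s → s̄`.  Maximality is expressed by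
the non-existence of a solution extending the given one to a strictly larger
order-connected domain. -/
theorem stmt6 (m n z₀ : ℝ) (θ x z θd : ℝ → ℝ) (I : Set ℝ)
    (hI : I.OrdConnected) (hIopen : IsOpen I) (hI0 : (0 : ℝ) ∈ I)
    (hx : ∀ s ∈ I, HasDerivAt x (Real.cos (θ s)) s)
    (hz : ∀ s ∈ I, HasDerivAt z (Real.sin (θ s)) s)
    (hθ : ∀ s ∈ I, HasDerivAt θ (θd s) s)
    (hzpos : ∀ s ∈ I, 0 < z s)
    (hode : ∀ s ∈ I, θd s = ((m - 1) * Real.cos (θ s) + n) / z s)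
    (hθ0 : θ 0 = 0) (hz0 : z 0 = z₀) (hz₀ : 0 < z₀)
    (hn : 0 ≤ n) (hmn : n + m - 1 < 0)
    (hmax : ∀ (J : Set ℝ) (θ₂ x₂ z₂ θd₂ : ℝ → ℝ),
      J.OrdConnected → IsOpen J → I ⊆ J →
      (∀ s ∈ I, θ₂ s = θ s ∧ x₂ s = x s ∧ z₂ s = z s) →
      (∀ s ∈ J, HasDerivAt x₂ (Real.cos (θ₂ s)) s ∧
        HasDerivAt z₂ (Real.sin (θ₂ s)) s ∧ HasDerivAt θ₂ (θd₂ s) s ∧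
        0 < z₂ s ∧ θd₂ s = ((m - 1) * Real.cos (θ₂ s) + n) / z₂ s) →
      J ⊆ I) :
    ∃ sbar : ℝ, 0 < sbar ∧ IsLUB I sbar ∧
      Tendsto z (𝓝[<] sbar) (𝓝 0) := by
  have h1m : 0 < 1 - m := by linarith
  set c : ℝ := n / (1 - m) with hc_def
  have hc0 : 0 ≤ c := div_nonneg hn h1m.le
  have hc1 : c < 1 := (div_lt_one h1m).2 (by linarith)
  have hcn : c * (1 - m) = n := div_mul_cancel₀ n h1m.ne'
  clear_value c
  have hIcc : ∀ {a b : ℝ}, a ∈ I → b ∈ I → Icc a b ⊆ I := fun ha hb => hI.out ha hb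
  set F : ℝ → ℝ := fun s => z s ^ (m - 1) * (Real.cos (θ s) - c) with hF_def
  -- conserved quantity
  have hF : ∀ s ∈ I, HasDerivAt F 0 s := by
    intro s hs
    have hzs := hzpos s hs
    have h1 : HasDerivAt (fun t => z t ^ (m - 1))
        ((m - 1) * z s ^ (m - 1 - 1) * Real.sin (θ s)) s :=
      (Real.hasDerivAt_rpow_const (x := z s) (p := m - 1) (Or.inl hzs.ne')).comp s (hz s hs)
    have h2 : HasDerivAt (fun t => Real.cos (θ t) - c) (-Real.sin (θ s) * θd s) s :=
      ((Real.hasDerivAt_cos (θ s)).comp s (hθ s hs)).sub_const c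
    have h3 := h1.mul h2
    refine h3.congr_deriv (Eq.symm ?_)
    rw [hode s hs, Real.rpow_sub_one hzs.ne' (m - 1)]
    have hzne := hzs.ne'
    field_simp
    linear_combination (-(z s ^ (m - 1) * Real.sin (θ s))) * hcn
  have hFc : ∀ s ∈ I, 0 ≤ s → F s = F 0 := by
    intro s hs h0s
    have hss : Icc 0 s ⊆ I := hIcc hI0 hs
    exact constant_of_has_deriv_right_zero
      (fun t ht => (hF t (hss ht)).continuousAt.continuousWithinAt)
      (fun t ht => (hF t (hss (Ico_subset_Icc_self ht))).hasDerivWithinAt)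
      s (right_mem_Icc.2 h0s)
  have hF0 : F 0 = z₀ ^ (m - 1) * (1 - c) := by
    simp [hF_def, hθ0, hz0, Real.cos_zero]
  have hF0pos : 0 < F 0 := by
    rw [hF0]; exact mul_pos (Real.rpow_pos_of_pos hz₀ _) (by linarith)
  have hcos : ∀ s ∈ I, 0 ≤ s → c < Real.cos (θ s) := by
    intro s hs h0s
    have h := (hFc s hs h0s).symm ▸ hF0pos
    simp only [hF_def] at h
    have hp : 0 < z s ^ (m - 1) := Real.rpow_pos_of_pos (hzpos s hs) _
    by_contra hcon
    push_neg at hcon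
    nlinarith [h, mul_nonpos_of_nonneg_of_nonpos hp.le
      (by linarith : Real.cos (θ s) - c ≤ 0)]
  have hθrange : ∀ s ∈ I, 0 ≤ s → -(π / 2) < θ s ∧ θ s < π / 2 := by
    intro s hs h0s
    have hsub := hIcc hI0 hs
    have hcont : ContinuousOn θ (Icc 0 s) :=
      fun t ht => (hθ t (hsub ht)).continuousAt.continuousWithinAt
    constructor
    · by_contra hcon
      push_neg at hcon
      obtain ⟨t, htmem, htv⟩ := intermediate_value_Icc' h0s hcont
        (show -(π/2) ∈ Icc (θ s) (θ 0) from ⟨hcon, by rw [hθ0]; linarith [Real.pi_pos]⟩)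
      have := hcos t (hsub htmem) htmem.1
      rw [htv, Real.cos_neg, Real.cos_pi_div_two] at this
      linarith
    · by_contra hcon
      push_neg at hcon
      obtain ⟨t, htmem, htv⟩ := intermediate_value_Icc h0s hcont
        (show π/2 ∈ Icc (θ 0) (θ s) from ⟨by rw [hθ0]; linarith [Real.pi_pos], hcon⟩)
      have := hcos t (hsub htmem) htmem.1
      rw [htv, Real.cos_pi_div_two] at this
      linarith
  have hθdneg : ∀ s ∈ I, 0 ≤ s → θd s < 0 := by
    intro s hs h0s
    rw [hode s hs]
    apply div_neg_of_neg_of_pos _ (hzpos s hs)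
    nlinarith [mul_lt_mul_of_pos_left (hcos s hs h0s) h1m]
  have hθanti : ∀ a b, a ∈ I → b ∈ I → 0 ≤ a → a < b → θ b < θ a := by
    intro a b ha hb h0a hab
    have hsub := hIcc ha hb
    have hSA : StrictAntiOn θ (Icc a b) := by
      apply strictAntiOn_of_deriv_neg (convex_Icc a b)
        (fun t ht => (hθ t (hsub ht)).continuousAt.continuousWithinAt)
      intro t ht
      rw [interior_Icc] at ht
      have htI : t ∈ I := hsub (Ioo_subset_Icc_self ht)
      rw [(hθ t htI).deriv]
      exact hθdneg t htI (h0a.trans ht.1.le)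
    exact hSA (left_mem_Icc.2 hab.le) (right_mem_Icc.2 hab.le) hab
  have hθneg : ∀ t ∈ I, 0 < t → θ t < 0 := by
    intro t ht h0t
    have := hθanti 0 t hI0 ht le_rfl h0t
    rwa [hθ0] at this
  have hsinneg : ∀ t ∈ I, 0 < t → Real.sin (θ t) < 0 := by
    intro t ht h0t
    exact Real.sin_neg_of_neg_of_neg_pi_lt (hθneg t ht h0t)
      (by linarith [(hθrange t ht h0t.le).1, Real.pi_pos])
  have hzanti : ∀ a b, a ∈ I → b ∈ I → 0 ≤ a → a ≤ b → z b ≤ z a := by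
    intro a b ha hb h0a hab
    have hsub := hIcc ha hb
    have hAO : AntitoneOn z (Icc a b) := by
      apply antitoneOn_of_deriv_nonpos (convex_Icc a b)
        (fun t ht => (hz t (hsub ht)).continuousAt.continuousWithinAt)
      · intro t ht
        rw [interior_Icc] at ht
        exact (hz t (hsub (Ioo_subset_Icc_self ht))).differentiableAt.differentiableWithinAt
      · intro t ht
        rw [interior_Icc] at ht
        have htI : t ∈ I := hsub (Ioo_subset_Icc_self ht)
        rw [(hz t htI).deriv]
        rcases lt_or_eq_of_le (h0a.trans ht.1.le) with h | h
        · exact (hsinneg t htI h).le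
        · rw [← h, hθ0]; simp
    exact hAO (left_mem_Icc.2 hab) (right_mem_Icc.2 hab) hab
  -- choose a positive point s₁ ∈ I
  obtain ⟨ε, hε, hball⟩ := Metric.isOpen_iff.1 hIopen 0 hI0
  set s₁ : ℝ := ε / 2 with hs₁_def
  have hs₁pos : 0 < s₁ := by positivity
  have hs₁I : s₁ ∈ I := hball (by
    simp only [Metric.mem_ball, Real.dist_eq, sub_zero, abs_of_pos hs₁pos]
    linarith)
  have hθ₁neg : θ s₁ < 0 := hθneg s₁ hs₁I hs₁pos
  have hθ₁gt : -(π / 2) < θ s₁ := (hθrange s₁ hs₁I hs₁pos.le).1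
  have hsin₁ : Real.sin (θ s₁) < 0 := hsinneg s₁ hs₁I hs₁pos
  -- θ monotone comparison with s₁, and sin comparison
  have hsinle : ∀ s ∈ I, s₁ ≤ s → Real.sin (θ s) ≤ Real.sin (θ s₁) := by
    intro s hs h1s
    rcases eq_or_lt_of_le h1s with h | h
    · rw [← h]
    · have hlt : θ s < θ s₁ := hθanti s₁ s hs₁I hs hs₁pos.le h
      have hmem1 : θ s ∈ Icc (-(π/2)) (π/2) :=
        ⟨(hθrange s hs (hs₁pos.le.trans h1s)).1.le, (hθrange s hs (hs₁pos.le.trans h1s)).2.le⟩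
      have hmem2 : θ s₁ ∈ Icc (-(π/2)) (π/2) := ⟨hθ₁gt.le, (hθrange s₁ hs₁I hs₁pos.le).2.le⟩
      exact (Real.strictMonoOn_sin hmem1 hmem2 hlt).le
  -- linear decay bound
  have hbound : ∀ s ∈ I, s₁ ≤ s → z s ≤ z s₁ + Real.sin (θ s₁) * (s - s₁) := by
    intro s hs h1s
    have hsub := hIcc hs₁I hs
    have hAO : AntitoneOn (fun t => z t - Real.sin (θ s₁) * t) (Icc s₁ s) := by
      apply antitoneOn_of_deriv_nonpos (convex_Icc s₁ s)
      · intro t ht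
        exact ((hz t (hsub ht)).sub ((hasDerivAt_id t).const_mul
          (Real.sin (θ s₁)))).continuousAt.continuousWithinAt
      · intro t ht
        rw [interior_Icc] at ht
        exact ((hz t (hsub (Ioo_subset_Icc_self ht))).sub ((hasDerivAt_id t).const_mul
          (Real.sin (θ s₁)))).differentiableAt.differentiableWithinAt
      · intro t ht
        rw [interior_Icc] at ht
        have htI : t ∈ I := hsub (Ioo_subset_Icc_self ht)
        have hD : HasDerivAt (fun t => z t - Real.sin (θ s₁) * t)
            (Real.sin (θ t) - Real.sin (θ s₁) * 1) t :=
          (hz t htI).sub ((hasDerivAt_id t).const_mul (Real.sin (θ s₁)))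
        rw [hD.deriv]
        have := hsinle t htI ht.1.le
        linarith
    have := hAO (left_mem_Icc.2 h1s) (right_mem_Icc.2 h1s) h1s
    simp only at this
    linarith
  -- I is bounded above
  have hB : ∀ s ∈ I, s ≤ s₁ + z s₁ / (-Real.sin (θ s₁)) := by
    intro s hs
    have hq : 0 < z s₁ / (-Real.sin (θ s₁)) := div_pos (hzpos s₁ hs₁I) (by linarith)
    rcases le_or_gt s s₁ with h | h
    · linarith
    · have hb := hbound s hs h.le
      have hzs := hzpos s hs
      have hqq : z s₁ / (-Real.sin (θ s₁)) * (-Real.sin (θ s₁)) = z s₁ :=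
        div_mul_cancel₀ _ (by linarith)
      nlinarith
  have hBdd : BddAbove I := ⟨s₁ + z s₁ / (-Real.sin (θ s₁)), fun s hs => hB s hs⟩
  set sbar : ℝ := sSup I with hsbar_def
  have hlub : IsLUB I sbar := isLUB_csSup ⟨0, hI0⟩ hBdd
  have hsbar_pos : 0 < sbar := lt_of_lt_of_le hs₁pos (hlub.1 hs₁I)
  have hsbar_not : sbar ∉ I := by
    intro hmem
    obtain ⟨ε', hε', hball'⟩ := Metric.isOpen_iff.1 hIopen sbar hmem
    have : sbar + ε' / 2 ∈ I := hball' (by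
      simp only [Metric.mem_ball, Real.dist_eq, add_sub_cancel_left, abs_of_pos (by positivity : (0:ℝ) < ε'/2)]
      linarith)
    have := hlub.1 this
    linarith
  have hIlt : ∀ s ∈ I, s < sbar := fun s hs =>
    lt_of_le_of_ne (hlub.1 hs) (fun h => hsbar_not (h ▸ hs))
  have hmem : ∀ t, s₁ ≤ t → t < sbar → t ∈ I := by
    intro t h1 h2
    obtain ⟨u, huI, htu⟩ := exists_lt_of_lt_csSup ⟨0, hI0⟩ h2
    exact hIcc hs₁I huI ⟨h1, htu.le⟩
  -- key claim: z gets arbitrarily small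
  have KEY : ∀ ε : ℝ, 0 < ε → ∃ t, t ∈ I ∧ s₁ ≤ t ∧ z t < ε := by
    by_contra hcon
    push_neg at hcon
    obtain ⟨ℓ, hℓpos, hℓ⟩ := hcon
    -- setup for Picard–Lindelöf extension
    set v : ℝ × ℝ × ℝ → ℝ × ℝ × ℝ :=
      fun p => (((m - 1) * Real.cos p.1 + n) / p.2.2, Real.cos p.1, Real.sin p.1) with hv_def
    set C : ℝ := max (2 * (|m - 1| + n) / ℓ) 1 with hC_def
    have hC1 : (1:ℝ) ≤ C := le_max_right _ _
    have hCpos : 0 < C := lt_of_lt_of_le one_pos hC1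
    have hCnum : 2 * (|m - 1| + n) / ℓ ≤ C := le_max_left _ _
    set R : ℝ := ℓ / 2 with hR_def
    have hRpos : 0 < R := by positivity
    set δ : ℝ := R / C with hδ_def
    have hδpos : 0 < δ := by positivity
    have hCδ : C * δ = R := by rw [hδ_def]; field_simp
    have hs₁sbar : s₁ < sbar := hIlt s₁ hs₁I
    set d : ℝ := min (δ / 2) ((sbar - s₁) / 2) with hd_def
    have hdpos : 0 < d := lt_min (by positivity) (by linarith)
    have hd1 : d ≤ δ / 2 := min_le_left _ _
    have hd2 : d ≤ (sbar - s₁) / 2 := min_le_right _ _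
    set t₀ : ℝ := sbar - d with ht₀_def
    have ht₀s₁ : s₁ ≤ t₀ := by rw [ht₀_def]; linarith
    have ht₀lt : t₀ < sbar := by rw [ht₀_def]; linarith
    have ht₀I : t₀ ∈ I := hmem t₀ ht₀s₁ ht₀lt
    have ht₀δ : sbar < t₀ + δ := by rw [ht₀_def]; linarith
    set sol : ℝ → ℝ × ℝ × ℝ := fun t => (θ t, x t, z t) with hsol_def
    set p₀ : ℝ × ℝ × ℝ := sol t₀ with hp₀_def
    have hp₀z : p₀.2.2 = z t₀ := rfl
    have hzt₀ : ℓ ≤ z t₀ := hℓ t₀ ht₀I ht₀s₁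
    have hball_z : ∀ p : ℝ × ℝ × ℝ, p ∈ Metric.closedBall p₀ R → ℓ / 2 ≤ p.2.2 := by
      intro p hp
      rw [Metric.mem_closedBall] at hp
      have h2 : dist p.2.2 p₀.2.2 ≤ dist p p₀ := by
        calc dist p.2.2 p₀.2.2 ≤ dist p.2 p₀.2 := by
              rw [Prod.dist_eq]; exact le_max_right _ _
          _ ≤ dist p p₀ := by rw [Prod.dist_eq]; exact le_max_right _ _
      have h4 : dist p.2.2 p₀.2.2 ≤ R := h2.trans hp
      rw [Real.dist_eq, hp₀z] at h4
      have h3 := (abs_le.1 h4).1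
      linarith
    have habs : ∀ a : ℝ, |(m - 1) * Real.cos a + n| ≤ |m - 1| + n := by
      intro a
      calc |(m - 1) * Real.cos a + n| ≤ |(m - 1) * Real.cos a| + |n| := abs_add_le _ _
        _ = |m - 1| * |Real.cos a| + n := by rw [abs_mul, abs_of_nonneg hn]
        _ ≤ |m - 1| * 1 + n :=
            add_le_add_left (mul_le_mul_of_nonneg_left (Real.abs_cos_le_one a) (abs_nonneg _)) n
        _ = |m - 1| + n := by ring
    have hnorm3 : ∀ a zz : ℝ, ℓ / 2 ≤ zz →
        ‖(((m - 1) * Real.cos a + n) / zz, Real.cos a, Real.sin a)‖ ≤ C := by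
      intro a zz hzz
      have hzzpos : 0 < zz := lt_of_lt_of_le (by positivity) hzz
      have h1 : |((m - 1) * Real.cos a + n) / zz| ≤ (|m - 1| + n) / (ℓ / 2) := by
        rw [abs_div, abs_of_pos hzzpos]
        exact div_le_div₀ (by positivity) (habs a) (by positivity) hzz
      have h2 : (|m - 1| + n) / (ℓ / 2) = 2 * (|m - 1| + n) / ℓ := by
        field_simp
      rw [Prod.norm_def, Prod.norm_def]
      refine max_le ?_ (max_le ?_ ?_)
      · rw [Real.norm_eq_abs]; linarith
      · rw [Real.norm_eq_abs]; linarith [Real.abs_cos_le_one a]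
      · rw [Real.norm_eq_abs]; linarith [Real.abs_sin_le_one a]
    have hU_open : IsOpen {p : ℝ × ℝ × ℝ | 0 < p.2.2} :=
      isOpen_lt continuous_const (continuous_snd.comp continuous_snd)
    have hCD : ContDiffOn ℝ 1 v {p : ℝ × ℝ × ℝ | 0 < p.2.2} := by
      apply ContDiffOn.prodMk
      · apply ContDiffOn.div
        · exact ((contDiff_const.mul (Real.contDiff_cos.comp contDiff_fst)).add
            contDiff_const).contDiffOn
        · exact (contDiff_snd.comp contDiff_snd).contDiffOn
        · exact fun p hp => ne_of_gt hp
      · exact ContDiffOn.prodMk ((Real.contDiff_cos.comp contDiff_fst).contDiffOn)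
          ((Real.contDiff_sin.comp contDiff_fst).contDiffOn)
    have hballU : Metric.closedBall p₀ R ⊆ {p : ℝ × ℝ × ℝ | 0 < p.2.2} :=
      fun p hp => lt_of_lt_of_le (by positivity) (hball_z p hp)
    obtain ⟨K, hK⟩ := stmt6_aux_lipschitz hU_open hballU hCD
      (convex_closedBall _ _) (isCompact_closedBall _ _)
    have hmax_eq : max (t₀ + δ - t₀) (t₀ - (t₀ - δ)) = δ := by
      rw [add_sub_cancel_left, sub_sub_cancel, max_self]
    have ht₀mem : t₀ ∈ Icc (t₀ - δ) (t₀ + δ) := ⟨by linarith, by linarith⟩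
    have hpl : IsPicardLindelof (fun _ : ℝ => v) ⟨t₀, ht₀mem⟩ p₀ R.toNNReal 0 C.toNNReal K :=
      { lipschitzOnWith := fun t _ => by rw [Real.coe_toNNReal _ hRpos.le]; exact hK
        continuousOn := fun _ _ => continuousOn_const
        norm_le := fun t _ p hp => by
          rw [Real.coe_toNNReal _ hRpos.le] at hp
          rw [Real.coe_toNNReal _ hCpos.le]
          exact hnorm3 p.1 p.2.2 (hball_z p hp)
        mul_max_le := by
          show C.toNNReal * max (t₀ + δ - t₀) (t₀ - (t₀ - δ)) ≤ (R.toNNReal : ℝ) - ((0 : NNReal) : ℝ)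
          rw [Real.coe_toNNReal _ hRpos.le, Real.coe_toNNReal _ hCpos.le, NNReal.coe_zero,
            sub_zero, hmax_eq, hCδ] }
    obtain ⟨f, hf0, hfball, hfderiv⟩ :=
      stmt6_aux_pl ht₀mem p₀ (Real.coe_toNNReal _ hRpos.le) hpl
    have hfDA : ∀ t ∈ Ioo (t₀ - δ) (t₀ + δ), HasDerivAt f (v (f t)) t := fun t ht =>
      (hfderiv t (Ioo_subset_Icc_self ht)).hasDerivAt (Icc_mem_nhds ht.1 ht.2)
    have hsolDA : ∀ t ∈ I, HasDerivAt sol (v (sol t)) t := by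
      intro t ht
      have h := (hθ t ht).prodMk ((hx t ht).prodMk (hz t ht))
      have hveq : v (sol t) = (θd t, Real.cos (θ t), Real.sin (θ t)) := by
        simp only [hv_def, hsol_def, hode t ht]
      rw [hveq]
      exact h
    have hCd : C * d ≤ R := by
      have h1 : C * d ≤ C * (δ / 2) := mul_le_mul_of_nonneg_left hd1 hCpos.le
      have h2 : C * (δ / 2) = R / 2 := by linear_combination hCδ / 2
      linarith
    have hsolball : ∀ t ∈ I, t₀ ≤ t → sol t ∈ Metric.closedBall p₀ R := by
      intro t ht h0t
      have hsub2 : Icc t₀ t ⊆ I := hIcc ht₀I ht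
      have hbd := norm_image_sub_le_of_norm_deriv_le_segment'
        (f := sol) (f' := fun τ => v (sol τ)) (C := C)
        (fun τ hτ => (hsolDA τ (hsub2 hτ)).hasDerivWithinAt)
        (fun τ hτ => by
          have hτI : τ ∈ I := hsub2 (Ico_subset_Icc_self hτ)
          have hzτ : ℓ / 2 ≤ z τ := by linarith [hℓ τ hτI (ht₀s₁.trans hτ.1)]
          have hveq : v (sol τ) =
              (((m - 1) * Real.cos (θ τ) + n) / z τ, Real.cos (θ τ), Real.sin (θ τ)) := rfl
          show ‖v (sol τ)‖ ≤ C
          rw [hveq]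
          exact hnorm3 (θ τ) (z τ) hzτ)
        t (right_mem_Icc.2 h0t)
      rw [Metric.mem_closedBall, hp₀_def, dist_eq_norm]
      have htsbar : t < sbar := hIlt t ht
      calc ‖sol t - sol t₀‖ ≤ C * (t - t₀) := hbd
        _ ≤ C * d := mul_le_mul_of_nonneg_left (by linarith) hCpos.le
        _ ≤ R := hCd
    have hagree : ∀ b ∈ I, t₀ ≤ b → sol b = f b := by
      intro b hbI ht₀b
      have hbsbar : b < sbar := hIlt b hbI
      have hsub2 : Icc t₀ b ⊆ I := hIcc ht₀I hbI
      have hIoo : Icc t₀ b ⊆ Ioo (t₀ - δ) (t₀ + δ) := fun τ hτ =>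
        ⟨by linarith [hτ.1], by linarith [hτ.2]⟩
      have hEq := ODE_solution_unique_of_mem_Icc_right
        (v := fun _ : ℝ => v) (s := fun _ => Metric.closedBall p₀ R) (K := K)
        (fun _ _ => hK)
        (fun τ hτ => (hsolDA τ (hsub2 hτ)).continuousAt.continuousWithinAt)
        (fun τ hτ => (hsolDA τ (hsub2 (Ico_subset_Icc_self hτ))).hasDerivWithinAt)
        (fun τ hτ => hsolball τ (hsub2 (Ico_subset_Icc_self hτ)) hτ.1)
        (fun τ hτ => (hfDA τ (hIoo hτ)).continuousAt.continuousWithinAt)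
        (fun τ hτ => (hfDA τ (hIoo (Ico_subset_Icc_self hτ))).hasDerivWithinAt)
        (fun τ _ => hfball τ)
        (by rw [hf0])
      exact hEq (right_mem_Icc.2 ht₀b)
    -- glued extension
    set θ₂ : ℝ → ℝ := fun s => if s < sbar then θ s else (f s).1 with hθ₂_def
    set x₂ : ℝ → ℝ := fun s => if s < sbar then x s else (f s).2.1 with hx₂_def
    set z₂ : ℝ → ℝ := fun s => if s < sbar then z s else (f s).2.2 with hz₂_def
    set θd₂ : ℝ → ℝ := fun s => ((m - 1) * Real.cos (θ₂ s) + n) / z₂ s with hθd₂_def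
    have hagreeI : ∀ s ∈ I, θ₂ s = θ s ∧ x₂ s = x s ∧ z₂ s = z s := by
      intro s hs
      have hlt := hIlt s hs
      refine ⟨?_, ?_, ?_⟩ <;> simp [hθ₂_def, hx₂_def, hz₂_def, if_pos hlt]
    have heqf : ∀ s ∈ Ioo t₀ (t₀ + δ), θ₂ s = (f s).1 ∧ x₂ s = (f s).2.1 ∧ z₂ s = (f s).2.2 := by
      intro s hs
      by_cases hlt : s < sbar
      · have hsI : s ∈ I := hmem s (by linarith [hs.1]) hlt
        have hsol_eq : sol s = f s := hagree s hsI hs.1.le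
        have e1 : θ s = (f s).1 := by rw [← hsol_eq]
        have e2 : x s = (f s).2.1 := by rw [← hsol_eq]
        have e3 : z s = (f s).2.2 := by rw [← hsol_eq]
        refine ⟨?_, ?_, ?_⟩ <;>
          simp [hθ₂_def, hx₂_def, hz₂_def, if_pos hlt, e1, e2, e3]
      · refine ⟨?_, ?_, ?_⟩ <;> simp [hθ₂_def, hx₂_def, hz₂_def, if_neg hlt]
    set J : Set ℝ := I ∪ Ioo t₀ (t₀ + δ) with hJ_def
    have hJconn : J.OrdConnected := by
      refine ⟨fun a ha b hb t ht => ?_⟩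
      rcases lt_or_ge t sbar with h | h
      · rcases ha with haI | haO
        · obtain ⟨u, huI, htu⟩ := exists_lt_of_lt_csSup ⟨0, hI0⟩ h
          exact Or.inl (hIcc haI huI ⟨ht.1, htu.le⟩)
        · exact Or.inl (hmem t (by linarith [ht.1, haO.1]) h)
      · rcases hb with hbI | hbO
        · exact absurd (hIlt b hbI) (by push_neg; linarith [ht.2])
        · exact Or.inr ⟨by linarith [ht.1, hbO.1], by linarith [ht.2, hbO.2]⟩
    have hJopen : IsOpen J := hIopen.union isOpen_Ioo
    have hsolJ : ∀ s ∈ J, HasDerivAt x₂ (Real.cos (θ₂ s)) s ∧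
        HasDerivAt z₂ (Real.sin (θ₂ s)) s ∧ HasDerivAt θ₂ (θd₂ s) s ∧
        0 < z₂ s ∧ θd₂ s = ((m - 1) * Real.cos (θ₂ s) + n) / z₂ s := by
      intro s hs
      rcases hs with hsI | hsO
      · have hevθ : θ₂ =ᶠ[𝓝 s] θ :=
          eventually_of_mem (hIopen.mem_nhds hsI) (fun t ht => (hagreeI t ht).1)
        have hevx : x₂ =ᶠ[𝓝 s] x :=
          eventually_of_mem (hIopen.mem_nhds hsI) (fun t ht => (hagreeI t ht).2.1)
        have hevz : z₂ =ᶠ[𝓝 s] z :=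
          eventually_of_mem (hIopen.mem_nhds hsI) (fun t ht => (hagreeI t ht).2.2)
        obtain ⟨e1, e2, e3⟩ := hagreeI s hsI
        refine ⟨?_, ?_, ?_, ?_, rfl⟩
        · rw [e1]; exact (hx s hsI).congr_of_eventuallyEq hevx
        · rw [e1]; exact (hz s hsI).congr_of_eventuallyEq hevz
        · have hdd : θd₂ s = θd s := by
            simp only [hθd₂_def]; rw [e1, e3, ← hode s hsI]
          rw [hdd]
          exact (hθ s hsI).congr_of_eventuallyEq hevθ
        · rw [e3]; exact hzpos s hsI
      · have hevθ : θ₂ =ᶠ[𝓝 s] (fun t => (f t).1) :=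
          eventually_of_mem (isOpen_Ioo.mem_nhds hsO) (fun t ht => (heqf t ht).1)
        have hevx : x₂ =ᶠ[𝓝 s] (fun t => (f t).2.1) :=
          eventually_of_mem (isOpen_Ioo.mem_nhds hsO) (fun t ht => (heqf t ht).2.1)
        have hevz : z₂ =ᶠ[𝓝 s] (fun t => (f t).2.2) :=
          eventually_of_mem (isOpen_Ioo.mem_nhds hsO) (fun t ht => (heqf t ht).2.2)
        obtain ⟨e1, e2, e3⟩ := heqf s hsO
        have hsOδ : s ∈ Ioo (t₀ - δ) (t₀ + δ) := ⟨by linarith [hsO.1], hsO.2⟩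
        have hD := hfDA s hsOδ
        have hfst : HasDerivAt (fun t => (f t).1) ((v (f s)).1) s := by
          exact (ContinuousLinearMap.fst ℝ ℝ (ℝ × ℝ)).hasFDerivAt.comp_hasDerivAt s hD
        have hsnd : HasDerivAt (fun t => (f t).2) ((v (f s)).2) s := by
          exact (ContinuousLinearMap.snd ℝ ℝ (ℝ × ℝ)).hasFDerivAt.comp_hasDerivAt s hD
        have hsnd1 : HasDerivAt (fun t => (f t).2.1) ((v (f s)).2.1) s := by
          exact (ContinuousLinearMap.fst ℝ ℝ ℝ).hasFDerivAt.comp_hasDerivAt s hsnd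
        have hsnd2 : HasDerivAt (fun t => (f t).2.2) ((v (f s)).2.2) s := by
          exact (ContinuousLinearMap.snd ℝ ℝ ℝ).hasFDerivAt.comp_hasDerivAt s hsnd
        have hzfs : ℓ / 2 ≤ (f s).2.2 := hball_z (f s) (hfball s)
        refine ⟨?_, ?_, ?_, ?_, rfl⟩
        · rw [e1]
          have : (v (f s)).2.1 = Real.cos (f s).1 := rfl
          exact this ▸ hsnd1.congr_of_eventuallyEq hevx
        · rw [e1]
          have : (v (f s)).2.2 = Real.sin (f s).1 := rfl
          exact this ▸ hsnd2.congr_of_eventuallyEq hevz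
        · have hdd : θd₂ s = (v (f s)).1 := by
            simp only [hθd₂_def]
            rw [e1, e3]
          rw [hdd]
          exact hfst.congr_of_eventuallyEq hevθ
        · rw [e3]; linarith
    have hJI := hmax J θ₂ x₂ z₂ θd₂ hJconn hJopen subset_union_left hagreeI hsolJ
    have hsbarJ : sbar ∈ J := Or.inr ⟨ht₀lt, ht₀δ⟩
    exact hsbar_not (hJI hsbarJ)
  -- conclusion
  have : Tendsto z (𝓝[<] sbar) (𝓝 0) := by
    rw [Metric.tendsto_nhdsWithin_nhds]
    intro ε hε2
    obtain ⟨t, htI, hts₁, htz⟩ := KEY ε hε2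
    have htsbar : t < sbar := hIlt t htI
    refine ⟨sbar - t, by linarith, ?_⟩
    intro u hu hdist
    rw [Real.dist_eq] at hdist
    rw [mem_Iio] at hu
    have h1 : t ≤ u := by
      rcases abs_lt.1 hdist with ⟨h', _⟩
      linarith
    have huI : u ∈ I := hmem u (hts₁.trans h1) hu
    have hle : z u ≤ z t := hzanti t u htI huI (hs₁pos.le.trans hts₁) h1
    rw [Real.dist_eq, sub_zero, abs_of_pos (hzpos u huI)]
    linarith
  exact ⟨sbar, hsbar_pos, hlub, this⟩
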